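/- For every finite tree G, the first nonzero Steklov eigenvalue satisfies λ₂(G) ≤ 2/L, where L is the diameter of G. -/

import Mathlib

open Finset

attribute [local instance] Classical.propDecidable
set_option linter.unusedSectionVars false

namespace Steklov

variable {V : Type} [Fintype V] [DecidableEq V]

/-- The boundary of a graph: the set of vertices of degree one. -/
noncomputable def bdry (G : SimpleGraph V) : Finset V :=
  Finset.univ.filter (fun v => G.degree v = 1)

/-- The graph Laplacian `Δf(x) = Σ_{y∼x} (f x - f y)`. -/
noncomputable def lap (G : SimpleGraph V) (f : V → ℝ) (x : V) : ℝ :=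
  ∑ y ∈ G.neighborFinset x, (f x - f y)

/-- `f` is a Steklov eigenfunction of `G` with eigenvalue `lam`:
`f ≠ 0`, `Δf = 0` on the interior and `∂f/∂n = lam • f` on the boundary. -/
noncomputable def IsEigenpair (G : SimpleGraph V) (lam : ℝ) (f : V → ℝ) : Prop :=
  f ≠ 0 ∧ (∀ x, x ∉ bdry G → lap G f x = 0) ∧ ∀ x ∈ bdry G, lap G f x = lam * f x

/-- The first nonzero Steklov eigenvalue of `G`. -/
noncomputable def lambda2 (G : SimpleGraph V) : ℝ :=
  sInf {lam : ℝ | 0 < lam ∧ ∃ f : V → ℝ, IsEigenpair G lam f}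

/-- `f` is a `lam`-flow to `x` on `G`. -/
noncomputable def IsFlow (G : SimpleGraph V) (lam : ℝ) (x : V) (f : V → ℝ) : Prop :=
  f ≠ 0 ∧ (∀ w, w ∉ bdry G → w ≠ x → lap G f w = 0) ∧
    ∀ w ∈ bdry G, w ≠ x → lap G f w = lam * f w

/-- The Rayleigh quotient of `f` (sum over undirected edges in the numerator). -/
noncomputable def rayleigh (G : SimpleGraph V) (f : V → ℝ) : ℝ :=
  ((∑ x, ∑ y ∈ G.neighborFinset x, (f x - f y) ^ 2) / 2) / ∑ x ∈ bdry G, f x ^ 2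

/-- `Σ(G,x)`: the set of `lam ≥ 0` admitting a `lam`-flow `f` to `x` with `f x = 0`
which increases along edges pointing away from `x`. -/
def SigmaSet (G : SimpleGraph V) (x : V) : Set ℝ :=
  {lam | 0 ≤ lam ∧ ∃ f : V → ℝ, IsFlow G lam x f ∧ f x = 0 ∧
    ∀ y z : V, G.Adj y z → G.dist x z < G.dist x y → f z < f y}

/-- `Σ̂(G,x)`: the set of `lam ≥ 0` admitting a `lam`-flow `f` to `x` with `f x = 0`. -/
def SigmaHatSet (G : SimpleGraph V) (x : V) : Set ℝ :=
  {lam | 0 ≤ lam ∧ ∃ f : V → ℝ, IsFlow G lam x f ∧ f x = 0}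

/-- `σ(G,x) = inf Σ(G,x)`. -/
noncomputable def sigma (G : SimpleGraph V) (x : V) : ℝ := sInf (SigmaSet G x)

/-- `σ̂(G,x) = inf Σ̂(G,x)`. -/
noncomputable def sigmaHat (G : SimpleGraph V) (x : V) : ℝ := sInf (SigmaHatSet G x)

/-- The vertex set of the branch from `(u,v)`: the connected component of `u`
after deleting the edge between `u` and `v`. -/
def branchSet (G : SimpleGraph V) (u v : V) : Set V :=
  {w | (G.deleteEdges {s(u, v)}).Reachable u w}

/-- The vertex set of the subtree `H(u,v)` spanned by the branch from `(u,v)` together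
with `v`. -/
def branchClosed (G : SimpleGraph V) (u v : V) : Set V :=
  insert v (branchSet G u v)

/-- `σ(H(u,v), v)`, computed intrinsically in the subtree `H(u,v)`. -/
noncomputable def sigmaB (G : SimpleGraph V) (u v : V) : ℝ :=
  sigma (G.induce (branchClosed G u v)) ⟨v, Set.mem_insert _ _⟩

/-- The double `(G)²_x` of `G` at `x`: two disjoint copies of `G` with the two
copies of `x` identified. -/
def doubleAt (G : SimpleGraph V) (x : V) : SimpleGraph (V ⊕ {v : V // v ≠ x}) where
  Adj a b :=
    match a, b with
    | Sum.inl u, Sum.inl w => G.Adj u w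
    | Sum.inr u, Sum.inr w => G.Adj u.1 w.1
    | Sum.inl u, Sum.inr w => u = x ∧ G.Adj x w.1
    | Sum.inr u, Sum.inl w => w = x ∧ G.Adj x u.1
  symm := by
    constructor
    rintro (u | u) (w | w) h
    · exact h.symm
    · exact h
    · exact h
    · exact h.symm
  loopless := by
    constructor
    rintro (u | u) h
    · exact G.loopless.irrefl u h
    · exact G.loopless.irrefl u.1 h

/-- The (directed) Dirichlet energy form. -/
noncomputable def en (G : SimpleGraph V) (f h : V → ℝ) : ℝ :=
  ∑ x, ∑ y ∈ G.neighborFinset x, (f x - f y) * (h x - h y)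

lemma sum_nbr_swap (G : SimpleGraph V) (F : V → V → ℝ) :
    ∑ x, ∑ y ∈ G.neighborFinset x, F x y = ∑ x, ∑ y ∈ G.neighborFinset x, F y x := by
  have h : ∀ (Φ : V → V → ℝ), ∑ x, ∑ y ∈ G.neighborFinset x, Φ x y
      = ∑ x, ∑ y, if G.Adj x y then Φ x y else 0 := by
    intro Φ
    refine Finset.sum_congr rfl fun x _ => ?_
    rw [SimpleGraph.neighborFinset_eq_filter, Finset.sum_filter]
  rw [h, h, Finset.sum_comm]
  refine Finset.sum_congr rfl fun x _ => Finset.sum_congr rfl fun y _ => ?_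
  simp [SimpleGraph.adj_comm]

lemma green (G : SimpleGraph V) (f h : V → ℝ) :
    en G f h = 2 * ∑ x, lap G f x * h x := by
  have h1 : ∑ x, lap G f x * h x = ∑ x, ∑ y ∈ G.neighborFinset x, (f x - f y) * h x := by
    refine Finset.sum_congr rfl fun x _ => ?_
    rw [lap, Finset.sum_mul]
  have h2 : ∑ x, ∑ y ∈ G.neighborFinset x, (f x - f y) * h y
      = ∑ x, ∑ y ∈ G.neighborFinset x, (f y - f x) * h x :=
    sum_nbr_swap G (fun x y => (f x - f y) * h y)
  have e1 : en G f h = (∑ x, ∑ y ∈ G.neighborFinset x, (f x - f y) * h x)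
      - ∑ x, ∑ y ∈ G.neighborFinset x, (f x - f y) * h y := by
    rw [← Finset.sum_sub_distrib]
    refine Finset.sum_congr rfl fun x _ => ?_
    rw [← Finset.sum_sub_distrib]
    exact Finset.sum_congr rfl fun y _ => by ring
  have e3 : (∑ x, ∑ y ∈ G.neighborFinset x, (f x - f y) * h x)
      - ∑ x, ∑ y ∈ G.neighborFinset x, (f y - f x) * h x
      = ∑ x, 2 * (lap G f x * h x) := by
    rw [← Finset.sum_sub_distrib]
    refine Finset.sum_congr rfl fun x _ => ?_
    rw [← Finset.sum_sub_distrib, lap, Finset.sum_mul, Finset.mul_sum]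
    exact Finset.sum_congr rfl fun y _ => by ring
  rw [e1, h2, e3, ← Finset.mul_sum]

lemma en_self_nonneg (G : SimpleGraph V) (f : V → ℝ) : 0 ≤ en G f f := by
  refine Finset.sum_nonneg fun x _ => Finset.sum_nonneg fun y _ => ?_
  exact mul_self_nonneg _

lemma en_comm (G : SimpleGraph V) (f h : V → ℝ) : en G f h = en G h f := by
  unfold en; refine Finset.sum_congr rfl fun x _ => Finset.sum_congr rfl fun y _ => by ring

lemma en_add_left (G : SimpleGraph V) (f g h : V → ℝ) :
    en G (f + g) h = en G f h + en G g h := by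
  unfold en
  rw [← Finset.sum_add_distrib]
  refine Finset.sum_congr rfl fun x _ => ?_
  rw [← Finset.sum_add_distrib]
  exact Finset.sum_congr rfl fun y _ => by simp [Pi.add_apply]; ring

lemma en_sub_left (G : SimpleGraph V) (f g h : V → ℝ) :
    en G (f - g) h = en G f h - en G g h := by
  unfold en
  rw [← Finset.sum_sub_distrib]
  refine Finset.sum_congr rfl fun x _ => ?_
  rw [← Finset.sum_sub_distrib]
  exact Finset.sum_congr rfl fun y _ => by simp [Pi.sub_apply]; ring

lemma en_const_left (G : SimpleGraph V) (c : ℝ) (h : V → ℝ) :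
    en G (fun _ => c) h = 0 := by
  unfold en
  refine Finset.sum_eq_zero fun x _ => Finset.sum_eq_zero fun y _ => by simp

lemma const_of_en_self_eq_zero (G : SimpleGraph V) (hconn : G.Connected) {f : V → ℝ}
    (h : en G f f = 0) (x y : V) : f x = f y := by
  have hadj : ∀ a b : V, G.Adj a b → f a = f b := by
    intro a b hab
    have h1 : ∀ x ∈ (univ : Finset V), ∑ y ∈ G.neighborFinset x, (f x - f y) * (f x - f y) = 0 :=
      (Finset.sum_eq_zero_iff_of_nonneg
        (fun x _ => Finset.sum_nonneg fun y _ => mul_self_nonneg _)).1 h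
    have h2 := (Finset.sum_eq_zero_iff_of_nonneg (fun y _ => mul_self_nonneg (f a - f y))).1
      (h1 a (Finset.mem_univ a)) b (by rwa [SimpleGraph.mem_neighborFinset])
    have := mul_self_eq_zero.1 h2
    linarith
  obtain ⟨w⟩ := hconn.preconnected x y
  induction w with
  | nil => rfl
  | cons hab p ih => exact (hadj _ _ hab).trans ih

lemma lap_sub (G : SimpleGraph V) (f g : V → ℝ) (x : V) :
    lap G (f - g) x = lap G f x - lap G g x := by
  unfold lap
  rw [← Finset.sum_sub_distrib]
  exact Finset.sum_congr rfl fun y _ => by simp [Pi.sub_apply]; ring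

lemma lap_add (G : SimpleGraph V) (f g : V → ℝ) (x : V) :
    lap G (f + g) x = lap G f x + lap G g x := by
  unfold lap
  rw [← Finset.sum_add_distrib]
  exact Finset.sum_congr rfl fun y _ => by simp [Pi.add_apply]; ring

lemma lap_smul (G : SimpleGraph V) (c : ℝ) (f : V → ℝ) (x : V) :
    lap G (c • f) x = c * lap G f x := by
  unfold lap
  rw [Finset.mul_sum]
  exact Finset.sum_congr rfl fun y _ => by simp [Pi.smul_apply, smul_eq_mul]; ring

lemma lap_const (G : SimpleGraph V) (c : ℝ) (x : V) :
    lap G (fun _ => c) x = 0 := by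
  unfold lap; simp

section TreePart

open SimpleGraph Walk

variable {G : SimpleGraph V}

lemma dist_ne_of_adj (hG : G.IsTree) {x y : V} (hadj : G.Adj x y) (w : V) :
    G.dist x w ≠ G.dist y w := by
  intro heq
  have hconn := hG.isConnected
  obtain ⟨p, hp, hlp⟩ := (hconn.preconnected x w).exists_path_of_dist
  obtain ⟨q, hq, hlq⟩ := (hconn.preconnected y w).exists_path_of_dist
  have hxy1 : G.dist x y = 1 := SimpleGraph.dist_eq_one_iff_adj.2 hadj
  have hy : y ∉ p.support := by
    intro hy
    have h1 : G.dist y w ≤ (p.dropUntil y hy).length := SimpleGraph.dist_le _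
    have h2 : G.dist x y ≤ (p.takeUntil y hy).length := SimpleGraph.dist_le _
    have h3 : (p.takeUntil y hy).length + (p.dropUntil y hy).length = p.length := by
      rw [← SimpleGraph.Walk.length_append, SimpleGraph.Walk.take_spec]
    omega
  have hcons : (SimpleGraph.Walk.cons hadj.symm p).IsPath := hp.cons hy
  obtain ⟨r, _, hru⟩ := hG.existsUnique_path y w
  have e1 := hru _ hcons
  have e2 := hru _ hq
  have := congrArg SimpleGraph.Walk.length (e1.trans e2.symm)
  rw [SimpleGraph.Walk.length_cons] at this
  omega

lemma adj_dist_cases (hG : G.IsTree) {x y : V} (h : G.Adj x y) (w : V) :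
    G.dist x w = G.dist y w + 1 ∨ G.dist y w = G.dist x w + 1 := by
  have hne := dist_ne_of_adj hG h w
  have hxy1 : G.dist x y = 1 := SimpleGraph.dist_eq_one_iff_adj.2 h
  have hyx1 : G.dist y x = 1 := SimpleGraph.dist_eq_one_iff_adj.2 h.symm
  have t1 : G.dist x w ≤ G.dist x y + G.dist y w := hG.isConnected.dist_triangle
  have t2 : G.dist y w ≤ G.dist y x + G.dist x w := hG.isConnected.dist_triangle
  omega

lemma exists_closer (hG : G.IsTree) {x v : V} (hxv : x ≠ v) :
    ∃ y, G.Adj x y ∧ G.dist y v + 1 = G.dist x v := by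
  obtain ⟨p, hp, hl⟩ := (hG.isConnected.preconnected x v).exists_path_of_dist
  cases p with
  | nil => exact absurd rfl hxv
  | @cons _ b _ h q =>
    refine ⟨b, h, ?_⟩
    have h1 : G.dist b v ≤ q.length := SimpleGraph.dist_le q
    have h2 : G.dist x v ≤ G.dist x b + G.dist b v := hG.isConnected.dist_triangle
    have h3 : G.dist x b = 1 := SimpleGraph.dist_eq_one_iff_adj.2 h
    rw [SimpleGraph.Walk.length_cons] at hl
    omega

lemma closer_unique (hG : G.IsTree) {x v y₁ y₂ : V} (h1 : G.Adj x y₁) (h2 : G.Adj x y₂)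
    (hd1 : G.dist y₁ v + 1 = G.dist x v) (hd2 : G.dist y₂ v + 1 = G.dist x v) : y₁ = y₂ := by
  by_contra hne
  obtain ⟨q₁, hq₁, hl₁⟩ := (hG.isConnected.preconnected y₁ v).exists_path_of_dist
  obtain ⟨q₂, hq₂, hl₂⟩ := (hG.isConnected.preconnected y₂ v).exists_path_of_dist
  have hx1 : x ∉ q₁.support := by
    intro hx
    have ha : G.dist x v ≤ (q₁.dropUntil x hx).length := SimpleGraph.dist_le _
    have hb : (q₁.takeUntil x hx).length + (q₁.dropUntil x hx).length = q₁.length := by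
      rw [← SimpleGraph.Walk.length_append, SimpleGraph.Walk.take_spec]
    omega
  have hx2 : x ∉ q₂.support := by
    intro hx
    have ha : G.dist x v ≤ (q₂.dropUntil x hx).length := SimpleGraph.dist_le _
    have hb : (q₂.takeUntil x hx).length + (q₂.dropUntil x hx).length = q₂.length := by
      rw [← SimpleGraph.Walk.length_append, SimpleGraph.Walk.take_spec]
    omega
  obtain ⟨r, _, hru⟩ := hG.existsUnique_path x v
  have e := (hru (SimpleGraph.Walk.cons h1 q₁) (hq₁.cons hx1)).trans (hru (SimpleGraph.Walk.cons h2 q₂) (hq₂.cons hx2)).symm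
  have := congrArg (fun w => w.getVert 1) e
  simp only [SimpleGraph.Walk.getVert_cons_succ, SimpleGraph.Walk.getVert_zero] at this
  exact hne this

lemma lap_distFun (hG : G.IsTree) {v x : V} (hxv : x ≠ v) :
    lap G (fun w => (G.dist w v : ℝ)) x = 2 - G.degree x := by
  obtain ⟨p, hpadj, hd⟩ := exists_closer hG hxv
  have hmem : p ∈ G.neighborFinset x := by rwa [SimpleGraph.mem_neighborFinset]
  have hrest : ∀ y ∈ (G.neighborFinset x).erase p,
      ((G.dist x v : ℝ) - (G.dist y v : ℝ)) = -1 := by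
    intro y hy
    have hyne : y ≠ p := (Finset.mem_erase.1 hy).1
    have hyadj : G.Adj x y := by
      have := (Finset.mem_erase.1 hy).2; rwa [SimpleGraph.mem_neighborFinset] at this
    rcases adj_dist_cases hG hyadj v with hc | hc
    · exact absurd (closer_unique hG hyadj hpadj (by omega) hd) hyne
    · rw [hc]; push_cast; ring
  have hterm : ((G.dist x v : ℝ) - (G.dist p v : ℝ)) = 1 := by
    rw [← hd]; push_cast; ring
  unfold lap
  rw [← Finset.add_sum_erase _ _ hmem, hterm, Finset.sum_congr rfl hrest,
    Finset.sum_const, Finset.card_erase_of_mem hmem, SimpleGraph.card_neighborFinset_eq_degree]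
  have hdeg : 1 ≤ G.degree x := by
    rw [← SimpleGraph.card_neighborFinset_eq_degree]
    exact Finset.card_pos.2 ⟨p, hmem⟩
  rw [nsmul_eq_mul, Nat.cast_sub hdeg]
  push_cast
  ring

lemma lap_distFun_self (G : SimpleGraph V) (v : V) :
    lap G (fun w => (G.dist w v : ℝ)) v = -(G.degree v) := by
  unfold lap
  have : ∀ y ∈ G.neighborFinset v, ((G.dist v v : ℝ) - (G.dist y v : ℝ)) = -1 := by
    intro y hy
    rw [SimpleGraph.mem_neighborFinset] at hy
    rw [SimpleGraph.dist_self, SimpleGraph.dist_comm, SimpleGraph.dist_eq_one_iff_adj.2 hy]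
    norm_num
  rw [Finset.sum_congr rfl this, Finset.sum_const, SimpleGraph.card_neighborFinset_eq_degree]
  simp

lemma degree_eq_one_of_dist_eq_diam (hG : G.IsTree) (hdm : G.diam ≠ 0) {u v : V}
    (huv : G.dist u v = G.diam) : G.degree u = 1 := by
  have hne : u ≠ v := by
    intro h; subst h; rw [SimpleGraph.dist_self] at huv; exact hdm huv.symm
  have hub : ∀ w, G.dist w v ≤ G.diam := fun w =>
    SimpleGraph.dist_le_diam (SimpleGraph.ediam_ne_top_of_diam_ne_zero hdm)
  obtain ⟨p, hpadj, hd⟩ := exists_closer hG hne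
  have : G.neighborFinset u = {p} := by
    apply Finset.eq_singleton_iff_unique_mem.2
    refine ⟨by rwa [SimpleGraph.mem_neighborFinset], ?_⟩
    intro z hz
    rw [SimpleGraph.mem_neighborFinset] at hz
    rcases adj_dist_cases hG hz v with hc | hc
    · exact closer_unique hG hz hpadj (by omega) hd
    · have := hub z; omega
  rw [← SimpleGraph.card_neighborFinset_eq_degree, this, Finset.card_singleton]

end TreePart
section Spectral

lemma euclid_inner {ι : Type} [Fintype ι] (φ ψ : EuclideanSpace ℝ ι) :
    (inner ℝ φ ψ : ℝ) = ∑ i, φ i * ψ i := by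
  simp [PiLp.inner_apply, RCLike.inner_apply, mul_comm]

variable (G : SimpleGraph V)

/-- The map `f ↦ (f|_B, (Δf)|_{interior})`. -/
noncomputable def restrIn :
    (V → ℝ) →ₗ[ℝ] (({x : V // x ∈ bdry G} → ℝ) × ({x : V // x ∉ bdry G} → ℝ)) where
  toFun f := (fun i => f i.1, fun j => lap G f j.1)
  map_add' f g := by
    refine Prod.ext ?_ ?_ <;> funext i <;> simp [lap_add]
  map_smul' c f := by
    refine Prod.ext ?_ ?_ <;> funext i <;> simp [lap_smul]

lemma restrIn_injective (hconn : G.Connected) (hB : (bdry G).Nonempty) :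
    Function.Injective (restrIn G) := by
  have h0 : ∀ f : V → ℝ, restrIn G f = 0 → f = 0 := by
    intro f hf
    have hfB : ∀ x (hx : x ∈ bdry G), f x = 0 := fun x hx =>
      congrFun (congrArg Prod.fst hf) ⟨x, hx⟩
    have hfI : ∀ x (hx : x ∉ bdry G), lap G f x = 0 := fun x hx =>
      congrFun (congrArg Prod.snd hf) ⟨x, hx⟩
    have hen : en G f f = 0 := by
      rw [green]
      rw [Finset.sum_eq_zero, mul_zero]
      intro x _
      by_cases hx : x ∈ bdry G
      · rw [hfB x hx, mul_zero]
      · rw [hfI x hx, zero_mul]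
    obtain ⟨b0, hb0⟩ := hB
    funext x
    rw [Pi.zero_apply, const_of_en_self_eq_zero G hconn hen x b0, hfB b0 hb0]
  intro f g hfg
  have : f - g = 0 := h0 _ (by rw [map_sub, hfg, sub_self])
  funext x
  have := congrFun this x
  simp only [Pi.sub_apply, Pi.zero_apply] at this
  linarith

set_option maxHeartbeats 2000000 in
lemma restrIn_bijective (hconn : G.Connected) (hB : (bdry G).Nonempty) :
    Function.Bijective (restrIn G) := by
  have hinj := restrIn_injective G hconn hB
  have hdim : Module.finrank ℝ (V → ℝ)
      = Module.finrank ℝ ((({x : V // x ∈ bdry G} → ℝ)) × (({x : V // x ∉ bdry G} → ℝ))) := by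
    rw [Module.finrank_pi, Module.finrank_prod, Module.finrank_pi, Module.finrank_pi]
    have h1 := Fintype.card_subtype_compl (fun x : V => x ∈ bdry G)
    have h2 : Fintype.card {x : V // x ∈ bdry G} ≤ Fintype.card V :=
      Fintype.card_le_of_injective (fun x => x.1) Subtype.coe_injective
    omega
  exact ⟨hinj, (LinearMap.injective_iff_surjective_of_finrank_eq_finrank hdim).1 hinj⟩

/-- Harmonic extension of boundary data. -/
noncomputable def ExtL (hconn : G.Connected) (hB : (bdry G).Nonempty) :
    ({x : V // x ∈ bdry G} → ℝ) →ₗ[ℝ] (V → ℝ) :=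
  (LinearEquiv.ofBijective (restrIn G) (restrIn_bijective G hconn hB)).symm.toLinearMap.comp
    (LinearMap.inl ℝ _ _)

lemma restrIn_ExtL (hconn : G.Connected) (hB : (bdry G).Nonempty)
    (φ : {x : V // x ∈ bdry G} → ℝ) : restrIn G (ExtL G hconn hB φ) = (φ, 0) :=
  (LinearEquiv.ofBijective (restrIn G) (restrIn_bijective G hconn hB)).apply_symm_apply (φ, 0)

lemma ExtL_mem_bdry (hconn : G.Connected) (hB : (bdry G).Nonempty)
    (φ : {x : V // x ∈ bdry G} → ℝ) {x : V} (hx : x ∈ bdry G) :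
    ExtL G hconn hB φ x = φ ⟨x, hx⟩ :=
  congrFun (congrArg Prod.fst (restrIn_ExtL G hconn hB φ)) ⟨x, hx⟩

lemma lap_ExtL (hconn : G.Connected) (hB : (bdry G).Nonempty)
    (φ : {x : V // x ∈ bdry G} → ℝ) {x : V} (hx : x ∉ bdry G) :
    lap G (ExtL G hconn hB φ) x = 0 :=
  congrFun (congrArg Prod.snd (restrIn_ExtL G hconn hB φ)) ⟨x, hx⟩

/-- The Dirichlet-to-Neumann (Steklov) operator. -/
noncomputable def TL (hconn : G.Connected) (hB : (bdry G).Nonempty) :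
    EuclideanSpace ℝ {x : V // x ∈ bdry G} →ₗ[ℝ] EuclideanSpace ℝ {x : V // x ∈ bdry G} where
  toFun φ := WithLp.toLp 2 (fun i : {x : V // x ∈ bdry G} => lap G (ExtL G hconn hB φ) i.1)
  map_add' φ ψ := by ext i; simp [map_add, lap_add]
  map_smul' c φ := by ext i; simp [map_smul, lap_smul]

lemma TL_apply (hconn : G.Connected) (hB : (bdry G).Nonempty)
    (φ : EuclideanSpace ℝ {x : V // x ∈ bdry G}) (i : {x : V // x ∈ bdry G}) :
    TL G hconn hB φ i = lap G (ExtL G hconn hB φ) i.1 := rfl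

lemma TL_inner (hconn : G.Connected) (hB : (bdry G).Nonempty)
    (φ ψ : EuclideanSpace ℝ {x : V // x ∈ bdry G}) :
    (inner ℝ (TL G hconn hB φ) ψ : ℝ) = en G (ExtL G hconn hB φ) (ExtL G hconn hB ψ) / 2 := by
  have h1 : ∑ x ∈ bdry G, lap G (ExtL G hconn hB φ) x * (ExtL G hconn hB ψ) x
      = ∑ x : V, lap G (ExtL G hconn hB φ) x * (ExtL G hconn hB ψ) x := by
    refine Finset.sum_subset (Finset.subset_univ _) ?_
    intro x _ hx
    rw [lap_ExtL G hconn hB φ hx, zero_mul]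
  have h3 : ∀ i : {x : V // x ∈ bdry G},
      (ExtL G hconn hB ψ) i.1 = ψ i := by
    intro i
    rw [ExtL_mem_bdry G hconn hB ψ i.2]
  calc (inner ℝ (TL G hconn hB φ) ψ : ℝ)
      = ∑ i : {x : V // x ∈ bdry G}, lap G (ExtL G hconn hB φ) i.1 * ψ i := by
        rw [euclid_inner]
        exact Finset.sum_congr rfl fun i _ => by rw [TL_apply]
    _ = ∑ i : {x : V // x ∈ bdry G},
          lap G (ExtL G hconn hB φ) i.1 * (ExtL G hconn hB ψ) i.1 :=
        Finset.sum_congr rfl fun i _ => by rw [h3 i]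
    _ = ∑ x ∈ bdry G, lap G (ExtL G hconn hB φ) x * (ExtL G hconn hB ψ) x :=
        Finset.sum_coe_sort (bdry G)
          (fun x => lap G (ExtL G hconn hB φ) x * (ExtL G hconn hB ψ) x)
    _ = ∑ x : V, lap G (ExtL G hconn hB φ) x * (ExtL G hconn hB ψ) x := h1
    _ = en G (ExtL G hconn hB φ) (ExtL G hconn hB ψ) / 2 := by rw [green]; ring

lemma TL_symm (hconn : G.Connected) (hB : (bdry G).Nonempty) :
    (TL G hconn hB).IsSymmetric := by
  intro φ ψ
  rw [TL_inner, show (inner ℝ φ (TL G hconn hB ψ) : ℝ) = inner ℝ (TL G hconn hB ψ) φ from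
    real_inner_comm _ _, TL_inner, en_comm]

end Spectral
section MainEigen

lemma en_add_right (G : SimpleGraph V) (f g h : V → ℝ) :
    en G f (g + h) = en G f g + en G f h := by
  rw [en_comm G f (g + h), en_add_left, en_comm G g f, en_comm G h f]

lemma exists_eigen (G : SimpleGraph V) (hconn : G.Connected) (hB : (bdry G).Nonempty)
    (f0 : V → ℝ) (hmean : ∑ x ∈ bdry G, f0 x = 0) (hpos : 0 < ∑ x ∈ bdry G, f0 x ^ 2) :
    ∃ lam : ℝ, 0 < lam ∧ (∃ f, IsEigenpair G lam f) ∧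
      lam * ∑ x ∈ bdry G, f0 x ^ 2 ≤ en G f0 f0 / 2 := by
  classical
  set T := TL G hconn hB with hT
  have hsym := TL_symm G hconn hB
  have hn : Module.finrank ℝ (EuclideanSpace ℝ {x : V // x ∈ bdry G})
      = Fintype.card {x : V // x ∈ bdry G} := finrank_euclideanSpace
  set b := hsym.eigenvectorBasis hn with hbdef
  set μ := hsym.eigenvalues hn with hμdef
  have hb : ∀ i, T (b i) = μ i • b i := fun i => hsym.apply_eigenvectorBasis hn i
  have hnorm1 : ∀ i, ‖b i‖ = 1 := fun i => b.orthonormal.1 i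
  have hinnerTbb : ∀ i, (inner ℝ (T (b i)) (b i) : ℝ) = μ i := by
    intro i
    rw [hb i, real_inner_smul_left, real_inner_self_eq_norm_sq, hnorm1 i]
    ring
  have hμ0 : ∀ i, 0 ≤ μ i := by
    intro i
    have h2 : (0:ℝ) ≤ inner ℝ (T (b i)) (b i) := by
      rw [hT, TL_inner]
      have := en_self_nonneg G (ExtL G hconn hB (b i))
      linarith
    rw [hinnerTbb i] at h2
    exact h2
  set φ0 : EuclideanSpace ℝ {x : V // x ∈ bdry G} := WithLp.toLp 2 (fun i : {x : V // x ∈ bdry G} => f0 i.1) with hφ0def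
  have hφ0norm : (inner ℝ φ0 φ0 : ℝ) = ∑ x ∈ bdry G, f0 x ^ 2 := by
    rw [euclid_inner]
    rw [show (∑ i : {x : V // x ∈ bdry G}, φ0 i * φ0 i) = ∑ x ∈ bdry G, f0 x * f0 x from
      Finset.sum_coe_sort (bdry G) (fun x => f0 x * f0 x)]
    exact Finset.sum_congr rfl fun x _ => (pow_two (f0 x)).symm
  set c : Fin (Fintype.card {x : V // x ∈ bdry G}) → ℝ := fun i => b.repr φ0 i with hcdef
  -- zero eigenvalue coefficients vanish
  have hc_zero : ∀ i, μ i = 0 → c i = 0 := by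
    intro i hμi
    have hen : en G (ExtL G hconn hB (b i)) (ExtL G hconn hB (b i)) = 0 := by
      have h1 : (inner ℝ (T (b i)) (b i) : ℝ)
          = en G (ExtL G hconn hB (b i)) (ExtL G hconn hB (b i)) / 2 := TL_inner G hconn hB _ _
      rw [hinnerTbb i, hμi] at h1
      linarith
    have hconst := const_of_en_self_eq_zero G hconn hen
    obtain ⟨x0, hx0⟩ := id hB
    have hval : ∀ j : {x : V // x ∈ bdry G}, b i j = ExtL G hconn hB (b i) x0 := by
      intro j
      have h4 : ExtL G hconn hB (b i) j.1 = b i j := by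
        rw [ExtL_mem_bdry G hconn hB (b i) j.2]
      rw [← h4]
      exact hconst _ _
    have hci : c i = (inner ℝ (b i) φ0 : ℝ) := b.repr_apply_apply φ0 i
    rw [hci, euclid_inner]
    have h5 : ∑ j : {x : V // x ∈ bdry G}, b i j * φ0 j
        = ExtL G hconn hB (b i) x0 * ∑ j : {x : V // x ∈ bdry G}, φ0 j := by
      rw [Finset.mul_sum]
      exact Finset.sum_congr rfl fun j _ => by rw [hval j]
    have h6 : ∑ j : {x : V // x ∈ bdry G}, φ0 j = 0 := by
      rw [show (∑ j : {x : V // x ∈ bdry G}, φ0 j) = ∑ x ∈ bdry G, f0 x from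
        Finset.sum_coe_sort (bdry G) (fun x => f0 x)]
      exact hmean
    rw [h5, h6, mul_zero]
  -- Parseval
  have hTφ0 : (inner ℝ (T φ0) φ0 : ℝ) = ∑ i, μ i * (c i * c i) := by
    have h1 := b.repr.inner_map_map (T φ0) φ0
    rw [← h1, euclid_inner]
    refine Finset.sum_congr rfl fun i _ => ?_
    rw [hsym.eigenvectorBasis_apply_self_apply hn φ0 i]
    show μ i * c i * c i = μ i * (c i * c i)
    ring
  have hφφ : (inner ℝ φ0 φ0 : ℝ) = ∑ i, c i * c i := by
    have h1 := b.repr.inner_map_map φ0 φ0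
    rw [← h1, euclid_inner]
  -- a nonzero coefficient exists
  have hSne : ∃ i, c i ≠ 0 := by
    by_contra hall
    push_neg at hall
    have : (inner ℝ φ0 φ0 : ℝ) = 0 := by
      rw [hφφ]
      exact Finset.sum_eq_zero fun i _ => by rw [hall i, mul_zero]
    rw [hφ0norm] at this
    exact (ne_of_gt hpos) this
  set S := Finset.univ.filter (fun i => c i ≠ 0) with hSdef
  have hSne' : S.Nonempty := by
    obtain ⟨i, hi⟩ := hSne
    exact ⟨i, Finset.mem_filter.2 ⟨Finset.mem_univ _, hi⟩⟩
  obtain ⟨i0, hi0S, hmin⟩ := S.exists_min_image μ hSne'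
  have hi0c : c i0 ≠ 0 := (Finset.mem_filter.1 hi0S).2
  have hlam : 0 < μ i0 :=
    lt_of_le_of_ne (hμ0 i0) (fun h => hi0c (hc_zero i0 h.symm))
  -- min-max inequality
  have hsum : μ i0 * ∑ i, c i * c i ≤ ∑ i, μ i * (c i * c i) := by
    rw [Finset.mul_sum]
    refine Finset.sum_le_sum fun i _ => ?_
    by_cases hci : c i = 0
    · rw [hci]; simp
    · have hiS : i ∈ S := Finset.mem_filter.2 ⟨Finset.mem_univ _, hci⟩
      exact mul_le_mul_of_nonneg_right (hmin i hiS) (mul_self_nonneg _)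
  -- harmonic extension has smaller energy
  set h0 : V → ℝ := ExtL G hconn hB φ0 with hh0
  have hh0B : ∀ (x : V) (hx : x ∈ bdry G), h0 x = f0 x := by
    intro x hx
    rw [hh0, ExtL_mem_bdry G hconn hB φ0 hx]
  have hen_le : en G h0 h0 ≤ en G f0 f0 := by
    have hcross : en G h0 (f0 - h0) = 0 := by
      rw [green]
      rw [Finset.sum_eq_zero, mul_zero]
      intro x _
      by_cases hx : x ∈ bdry G
      · have : (f0 - h0) x = 0 := by
          simp only [Pi.sub_apply, hh0B x hx, sub_self]
        rw [this, mul_zero]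
      · rw [hh0, lap_ExtL G hconn hB φ0 hx, zero_mul]
    have hq : 0 ≤ en G (f0 - h0) (f0 - h0) := en_self_nonneg _ _
    have expand : en G f0 f0
        = en G h0 h0 + en G h0 (f0 - h0) + (en G (f0 - h0) h0 + en G (f0 - h0) (f0 - h0)) := by
      have hdecomp : f0 = h0 + (f0 - h0) := by
        funext x; simp
      calc en G f0 f0 = en G (h0 + (f0 - h0)) (h0 + (f0 - h0)) := by rw [← hdecomp]
        _ = en G h0 (h0 + (f0 - h0)) + en G (f0 - h0) (h0 + (f0 - h0)) := en_add_left G _ _ _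
        _ = en G h0 h0 + en G h0 (f0 - h0) + (en G (f0 - h0) h0 + en G (f0 - h0) (f0 - h0)) := by
            rw [en_add_right, en_add_right]
    have hcross2 : en G (f0 - h0) h0 = 0 := by rw [en_comm]; exact hcross
    rw [expand, hcross, hcross2]
    linarith
  have hTinner : (inner ℝ (T φ0) φ0 : ℝ) = en G h0 h0 / 2 := by
    have h1 := TL_inner G hconn hB φ0 φ0
    rw [hT, h1]
  -- assemble
  refine ⟨μ i0, hlam, ⟨ExtL G hconn hB (b i0), ?_, ?_, ?_⟩, ?_⟩
  · -- nonzero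
    intro hzero
    have hbz : b i0 = 0 := by
      ext j
      have h4 : ExtL G hconn hB (b i0) j.1 = b i0 j := by
        rw [ExtL_mem_bdry G hconn hB (b i0) j.2]
      rw [← h4, hzero]
      rfl
    have := hnorm1 i0
    rw [hbz, norm_zero] at this
    norm_num at this
  · exact fun x hx => lap_ExtL G hconn hB (b i0) hx
  · intro x hx
    have h1 : T (b i0) ⟨x, hx⟩ = lap G (ExtL G hconn hB (b i0)) x := TL_apply G hconn hB (b i0) ⟨x, hx⟩
    rw [hb i0] at h1
    have h2 : (μ i0 • b i0) ⟨x, hx⟩ = μ i0 * b i0 ⟨x, hx⟩ := rfl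
    rw [h2] at h1
    rw [← h1, ExtL_mem_bdry G hconn hB (b i0) hx]
  · have chain : μ i0 * ∑ x ∈ bdry G, f0 x ^ 2 ≤ en G h0 h0 / 2 := by
      rw [← hφ0norm, hφφ]
      rw [← hTinner, hTφ0]
      exact hsum
    have : en G h0 h0 / 2 ≤ en G f0 f0 / 2 := by linarith
    linarith

end MainEigen

/-- For every finite tree `G` of diameter `L`: `λ₂(G) ≤ 2 / L`. -/
theorem lambda2_le_two_div_diam (G : SimpleGraph V) (hG : G.IsTree)
    (hcard : 2 ≤ Fintype.card V) :
    lambda2 G ≤ 2 / (G.diam : ℝ) := by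
  classical
  haveI hnt : Nontrivial V := Fintype.one_lt_card_iff_nontrivial.1 hcard
  have hconn := hG.isConnected
  have hnetop : G.ediam ≠ ⊤ := by
    obtain ⟨u, v, huv⟩ := SimpleGraph.exists_edist_eq_ediam_of_finite (G := G)
    rw [← huv]
    exact SimpleGraph.edist_ne_top_iff_reachable.2 (hconn.preconnected u v)
  have hdm : G.diam ≠ 0 := by
    rw [Ne, SimpleGraph.diam_eq_zero]
    rintro (h | h)
    · exact hnetop h
    · exact (not_subsingleton_iff_nontrivial.2 hnt) h
  obtain ⟨u, v, huv⟩ := SimpleGraph.exists_dist_eq_diam (G := G)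
  have hL1 : 1 ≤ G.diam := Nat.one_le_iff_ne_zero.2 hdm
  have hune : u ≠ v := by
    intro h; subst h; rw [SimpleGraph.dist_self] at huv; exact hdm huv.symm
  have hdegu : G.degree u = 1 := degree_eq_one_of_dist_eq_diam hG hdm huv
  have hdegv : G.degree v = 1 := degree_eq_one_of_dist_eq_diam hG hdm
    (by rwa [SimpleGraph.dist_comm])
  have huB : u ∈ bdry G := Finset.mem_filter.2 ⟨Finset.mem_univ _, hdegu⟩
  have hvB : v ∈ bdry G := Finset.mem_filter.2 ⟨Finset.mem_univ _, hdegv⟩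
  have hB : (bdry G).Nonempty := ⟨u, huB⟩
  set L : ℝ := (G.diam : ℝ) with hLdef
  have hLpos : (0:ℝ) < L := by
    rw [hLdef]; exact_mod_cast Nat.pos_of_ne_zero hdm
  set A : V → ℝ := fun w => (G.dist w v : ℝ) with hA
  set B : V → ℝ := fun w => (G.dist w u : ℝ) with hBdef
  set g : V → ℝ := A - B with hg
  have hgu : g u = L := by
    show ((G.dist u v : ℝ)) - ((G.dist u u : ℝ)) = L
    rw [huv, SimpleGraph.dist_self]
    simp [hLdef]
  have hgv : g v = -L := by
    show ((G.dist v v : ℝ)) - ((G.dist v u : ℝ)) = -L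
    rw [show G.dist v u = G.dist u v from SimpleGraph.dist_comm, huv, SimpleGraph.dist_self]
    simp [hLdef]
  have hlapg : ∀ x, x ≠ u → x ≠ v → lap G g x = 0 := by
    intro x hxu hxv
    have h1 : lap G A x = 2 - G.degree x := lap_distFun hG hxv
    have h2 : lap G B x = 2 - G.degree x := lap_distFun hG hxu
    rw [hg, lap_sub, h1, h2]; ring
  have hlapgu : lap G g u = 2 := by
    have h1 : lap G A u = 2 - G.degree u := lap_distFun hG hune
    have h2 : lap G B u = -(G.degree u) := lap_distFun_self G u
    rw [hg, lap_sub, h1, h2, hdegu]; norm_num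
  have hlapgv : lap G g v = -2 := by
    have h1 : lap G A v = -(G.degree v) := lap_distFun_self G v
    have h2 : lap G B v = 2 - G.degree v := lap_distFun hG hune.symm
    rw [hg, lap_sub, h1, h2, hdegv]; norm_num
  have heng : en G g g = 8 * L := by
    rw [green]
    have hsplit : ∑ x : V, lap G g x * g x = ∑ x ∈ ({u, v} : Finset V), lap G g x * g x := by
      symm
      apply Finset.sum_subset (Finset.subset_univ _)
      intro x _ hx
      simp only [Finset.mem_insert, Finset.mem_singleton] at hx
      push_neg at hx
      rw [hlapg x hx.1 hx.2, zero_mul]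
    rw [hsplit, Finset.sum_pair hune, hlapgu, hlapgv, hgu, hgv]
    ring
  set cc : ℝ := (∑ x ∈ bdry G, g x) / ((bdry G).card : ℝ) with hcc
  set f0 : V → ℝ := g - (fun _ => cc) with hf0
  have hcard0 : ((bdry G).card : ℝ) ≠ 0 :=
    Nat.cast_ne_zero.2 (Finset.card_ne_zero_of_mem huB)
  have hmean : ∑ x ∈ bdry G, f0 x = 0 := by
    have : ∀ x, f0 x = g x - cc := fun x => rfl
    rw [Finset.sum_congr rfl fun x _ => this x, Finset.sum_sub_distrib, Finset.sum_const,
      nsmul_eq_mul, hcc]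
    field_simp
    ring
  have hf0u : f0 u = L - cc := by
    have : f0 u = g u - cc := rfl
    rw [this, hgu]
  have hf0v : f0 v = -L - cc := by
    have : f0 v = g v - cc := rfl
    rw [this, hgv]
  have hquad : 2 * L ^ 2 ≤ f0 u ^ 2 + f0 v ^ 2 := by
    rw [hf0u, hf0v]
    nlinarith [sq_nonneg cc]
  have hsumge : f0 u ^ 2 + f0 v ^ 2 ≤ ∑ x ∈ bdry G, f0 x ^ 2 := by
    rw [show f0 u ^ 2 + f0 v ^ 2 = ∑ x ∈ ({u, v} : Finset V), f0 x ^ 2 from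
      (Finset.sum_pair (f := fun x => f0 x ^ 2) hune).symm]
    apply Finset.sum_le_sum_of_subset_of_nonneg
    · intro x hx
      simp only [Finset.mem_insert, Finset.mem_singleton] at hx
      rcases hx with h | h
      · rw [h]; exact huB
      · rw [h]; exact hvB
    · exact fun i _ _ => sq_nonneg _
  have hpos : 0 < ∑ x ∈ bdry G, f0 x ^ 2 := by
    have h1 : (0:ℝ) < 2 * L ^ 2 := by positivity
    linarith
  have henf0 : en G f0 f0 = 8 * L := by
    rw [← heng, hf0, en_sub_left, en_const_left, sub_zero, en_comm, en_sub_left,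
      en_const_left, sub_zero]
  obtain ⟨lam, hlampos, ⟨f, hf⟩, hle⟩ := exists_eigen G hconn hB f0 hmean hpos
  have hlam_le : lam ≤ 2 / L := by
    rw [henf0] at hle
    have h1 : lam * (2 * L ^ 2) ≤ 4 * L := by
      have h2 := mul_le_mul_of_nonneg_left (le_trans hquad hsumge) (le_of_lt hlampos)
      linarith
    rw [le_div_iff₀ hLpos]
    nlinarith
  refine le_trans (csInf_le ?_ ?_) hlam_le
  · exact ⟨0, fun y hy => le_of_lt hy.1⟩
  · exact ⟨hlampos, f, hf⟩
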